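/- arXiv:1506.08113 — 2 statements merged into one kernel-verified Lean document; each statement's English description precedes it below -/
import Mathlib

section
/- Let n ≥ 2, let e₁,…,e_{n+1} be the standard basis of ℂ^{n+1}, and let z = [z₁,…,z_{n+1}] ∈ ∂ℍⁿ_ℂ \ {[e₁],[e_{n+1}]}. Define φ_z on the projective subspace Span({e₂,…,e_n}) by φ_z(w) = Span((Span((Span({w, e_{n+1}}) ∩ z^⊥) ∪ {z}) ∩ e₁^⊥) ∪ {e₁}) ∩ e_{n+1}^⊥. Then, identifying Span({e₂,…,e_n}) with ℙ^{n−2}_ℂ via [0,w₂,…,w_n,0] ↔ [w₂,…,w_n], φ_z coincides with the projectivization [[M_z]] of the (n−1)×(n−1) matrix M_z whose (i,j) entry is z_{i+1} z̄_{j+1} for i ≠ j and z_{n+1} z̄₁ + |z_{i+1}|² for i = j (1 ≤ i,j ≤ n−1). -/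
noncomputable section

open scoped ComplexConjugate
open scoped Matrix

namespace CKG

/-- The underlying vector space `ℂ^{n+1}`. -/
abbrev Vc (n : ℕ) := Fin (n + 1) → ℂ

instance projTopInst (K V : Type*) [DivisionRing K] [AddCommGroup V] [Module K V]
    [TopologicalSpace V] : TopologicalSpace (Projectivization K V) :=
  inferInstanceAs (TopologicalSpace (Quotient (projectivizationSetoid K V)))

/-- The complex projective space `ℙⁿ_ℂ`. -/
abbrev Prj (n : ℕ) := Projectivization ℂ (Vc n)

/-- The Hermitian matrix `H` with ones at the corners `(1,n+1)`, `(n+1,1)` and the identity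
in the central `(n-1) × (n-1)` block. -/
def Hmat (n : ℕ) : Matrix (Fin (n + 1)) (Fin (n + 1)) ℂ := fun i j =>
  if (i = 0 ∧ j = Fin.last n) ∨ (i = Fin.last n ∧ j = 0) ∨
      (i = j ∧ i ≠ 0 ∧ i ≠ Fin.last n) then 1 else 0

/-- The Hermitian form of signature `(1,n)` induced by `H`. -/
def herm (n : ℕ) (v w : Vc n) : ℂ := ∑ i, ∑ j, v i * Hmat n i j * conj (w j)

/-- The projective hyperplane `p^⊥` of points orthogonal to `p`. -/
def orthHyp (n : ℕ) (p : Prj n) : Set (Prj n) := {q | herm n q.rep p.rep = 0}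

/-- The projective span of a set of points of `ℙⁿ_ℂ`, as a set of points. -/
def projSpan (n : ℕ) (S : Set (Prj n)) : Set (Prj n) :=
  {r | r.rep ∈ Submodule.span ℂ (Projectivization.rep '' S)}

/-- The standard basis vector `e₁`. -/
def e1v (n : ℕ) : Vc n := Pi.single 0 1

/-- The standard basis vector `e_{n+1}`. -/
def eN1v (n : ℕ) : Vc n := Pi.single (Fin.last n) 1

lemma e1v_ne_zero (n : ℕ) : e1v n ≠ 0 := by
  intro h; have := congrFun h 0; simp [e1v] at this

lemma eN1v_ne_zero (n : ℕ) : eN1v n ≠ 0 := by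
  intro h; have := congrFun h (Fin.last n); simp [eN1v] at this

/-- The point `[e₁] ∈ ℙⁿ_ℂ`. -/
def e1pt (n : ℕ) : Prj n := Projectivization.mk ℂ (e1v n) (e1v_ne_zero n)

/-- The point `[e_{n+1}] ∈ ℙⁿ_ℂ`. -/
def eN1pt (n : ℕ) : Prj n := Projectivization.mk ℂ (eN1v n) (eN1v_ne_zero n)

/-- The inclusion of indices `{1, …, n-1}` (numbering `e₂, …, e_n`) into `Fin (n+1)`. -/
def idx {n : ℕ} (i : Fin (n - 1)) : Fin (n + 1) := ⟨i.val + 1, by omega⟩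

/-- The `(n-1) × (n-1)` matrix `M_z` with `(i,j)` entry `z_{i+1} z̄_{j+1}` for `i ≠ j` and
`z_{n+1} z̄₁ + |z_{i+1}|²` for `i = j`. -/
def Mz (n : ℕ) (z : Vc n) : Matrix (Fin (n - 1)) (Fin (n - 1)) ℂ := fun i j =>
  (if i = j then z (Fin.last n) * conj (z 0) else 0) + z (idx i) * conj (z (idx j))

/-- The embedding `ℂ^{n-1} → ℂ^{n+1}` into the coordinates `2, …, n`
(realizing the identification of `ℙ^{n-2}_ℂ` with `Span({e₂,…,e_n})`). -/
def embedMid (n : ℕ) (u : Fin (n - 1) → ℂ) : Vc n :=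
  fun i => ∑ j : Fin (n - 1), if idx j = i then u j else 0

/-- The projection `ℂ^{n+1} → ℂ^{n-1}` onto the coordinates `2, …, n`. -/
def midOf (n : ℕ) (v : Vc n) : Fin (n - 1) → ℂ := fun j => v (idx j)

/-- The Cartan angular invariant `𝔸(x,y,w) = arg(−⟨x,y⟩⟨y,w⟩⟨w,x⟩)`. -/
def cartanArg (n : ℕ) (x y w : Vc n) : ℝ :=
  Complex.arg (-(herm n x y * herm n y w * herm n w x))

/-- The map `φ_z` of the paper, at the level of sets:
`φ_z(w) = Span((Span((Span({w,e_{n+1}}) ∩ z^⊥) ∪ {z}) ∩ e₁^⊥) ∪ {e₁}) ∩ e_{n+1}^⊥`. -/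
def phiSet (n : ℕ) (z w : Prj n) : Set (Prj n) :=
  projSpan n
    ((projSpan n ((projSpan n {w, eN1pt n} ∩ orthHyp n z) ∪ {z}) ∩ orthHyp n (e1pt n))
      ∪ {e1pt n}) ∩ orthHyp n (eN1pt n)


variable {n : ℕ}


lemma idx_ne_zero (i : Fin (n - 1)) : idx i ≠ 0 := by
  simp [idx, Fin.ext_iff]

lemma idx_ne_last (i : Fin (n - 1)) : idx i ≠ Fin.last n := by
  intro h
  have h2 : i.val + 1 = n := by simpa [idx, Fin.ext_iff] using h
  have := i.isLt
  omega

lemma idx_injective : Function.Injective (idx (n := n)) := by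
  intro a b h
  simpa [idx, Fin.ext_iff] using h

lemma zero_ne_last (hn : 1 ≤ n) : (0 : Fin (n + 1)) ≠ Fin.last n := by
  intro h
  have h2 : (0 : ℕ) = n := by simpa [Fin.ext_iff] using h
  omega

lemma fin_trichotomy (hn : 1 ≤ n) (j : Fin (n + 1)) :
    j = 0 ∨ j = Fin.last n ∨ ∃ i : Fin (n - 1), j = idx i := by
  rcases Nat.eq_zero_or_pos j.val with h0 | hpos
  · exact Or.inl (Fin.ext h0)
  rcases eq_or_ne j.val n with hl | hne
  · exact Or.inr (Or.inl (Fin.ext (by simpa using hl)))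
  · have hj := j.isLt
    refine Or.inr (Or.inr ⟨⟨j.val - 1, by omega⟩, ?_⟩)
    simp only [idx, Fin.ext_iff]
    omega

lemma univ_decomp (hn : 1 ≤ n) :
    (Finset.univ : Finset (Fin (n + 1))) =
      insert 0 (insert (Fin.last n) (Finset.image idx Finset.univ)) := by
  ext j
  simp only [Finset.mem_univ, true_iff, Finset.mem_insert, Finset.mem_image]
  rcases fin_trichotomy hn j with h | h | ⟨i, h⟩
  · exact Or.inl h
  · exact Or.inr (Or.inl h)
  · exact Or.inr (Or.inr ⟨i, trivial, h.symm⟩)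

lemma herm_eq (hn : 1 ≤ n) (v w : Vc n) :
    herm n v w = v 0 * conj (w (Fin.last n)) + v (Fin.last n) * conj (w 0)
      + ∑ i : Fin (n - 1), v (idx i) * conj (w (idx i)) := by
  have h0l := zero_ne_last hn
  have inner : ∀ i : Fin (n + 1), (∑ j, v i * Hmat n i j * conj (w j)) =
      if i = 0 then v 0 * conj (w (Fin.last n))
      else if i = Fin.last n then v i * conj (w 0)
      else v i * conj (w i) := by
    intro i
    by_cases hi0 : i = 0
    · subst hi0
      have hH : ∀ j, Hmat n 0 j = if j = Fin.last n then 1 else 0 := by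
        intro j
        simp [Hmat, h0l, h0l.symm]
      simp [hH, mul_ite, ite_mul]
    by_cases hil : i = Fin.last n
    · subst hil
      have hH : ∀ j, Hmat n (Fin.last n) j = if j = 0 then 1 else 0 := by
        intro j
        simp [Hmat, h0l, h0l.symm]
      simp [hH, mul_ite, ite_mul, hi0]
    · have hH : ∀ j, Hmat n i j = if j = i then 1 else 0 := by
        intro j
        simp only [Hmat]
        by_cases hji : j = i
        · subst hji; simp [hi0, hil]
        · have : ¬ (i = j) := fun h => hji h.symm
          simp [hi0, hil, hji, this]
      simp [hH, mul_ite, ite_mul, hi0, hil]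
  rw [herm, Finset.sum_congr rfl fun i _ => inner i, univ_decomp hn,
    Finset.sum_insert (by
      simp only [Finset.mem_insert, Finset.mem_image]
      push_neg
      exact ⟨h0l, fun i _ => (idx_ne_zero i).symm ∘ Eq.symm⟩),
    Finset.sum_insert (by
      simp only [Finset.mem_image]
      push_neg
      exact fun i _ => fun h => idx_ne_last i h),
    Finset.sum_image (fun a _ b _ h => idx_injective h)]
  have e1 : ∀ i : Fin (n - 1),
      (if idx i = 0 then v 0 * conj (w (Fin.last n))
        else if idx i = Fin.last n then v (idx i) * conj (w 0)
        else v (idx i) * conj (w (idx i))) = v (idx i) * conj (w (idx i)) := fun i => by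
    rw [if_neg (idx_ne_zero i), if_neg (idx_ne_last i)]
  rw [Finset.sum_congr rfl fun i _ => e1 i, if_pos rfl, if_neg (Ne.symm h0l), if_pos rfl]
  ring


lemma herm_add_left (v v' w : Vc n) : herm n (v + v') w = herm n v w + herm n v' w := by
  simp only [herm, Pi.add_apply, ← Finset.sum_add_distrib]
  exact Finset.sum_congr rfl fun i _ => Finset.sum_congr rfl fun j _ => by ring

lemma herm_smul_left (c : ℂ) (v w : Vc n) : herm n (c • v) w = c * herm n v w := by
  simp only [herm, Pi.smul_apply, smul_eq_mul, Finset.mul_sum]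
  exact Finset.sum_congr rfl fun i _ => Finset.sum_congr rfl fun j _ => by ring

lemma herm_smul_right (c : ℂ) (v w : Vc n) : herm n v (c • w) = conj c * herm n v w := by
  simp only [herm, Pi.smul_apply, smul_eq_mul, map_mul, Finset.mul_sum]
  exact Finset.sum_congr rfl fun i _ => Finset.sum_congr rfl fun j _ => by ring

/-- `herm · χ` as a linear map. -/
def hermL (n : ℕ) (χ : Vc n) : Vc n →ₗ[ℂ] ℂ where
  toFun v := herm n v χ
  map_add' v v' := herm_add_left v v' χ
  map_smul' c v := herm_smul_left c v χ

@[simp] lemma hermL_apply (χ v : Vc n) : hermL n χ v = herm n v χ := rfl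

lemma e1v_at_zero : e1v n 0 = 1 := by simp [e1v]
lemma e1v_at_last (hn : 1 ≤ n) : e1v n (Fin.last n) = 0 := by
  simp [e1v, Pi.single_eq_of_ne (Ne.symm (zero_ne_last hn))]
lemma e1v_at_idx (i : Fin (n - 1)) : e1v n (idx i) = 0 := by
  simp [e1v, Pi.single_eq_of_ne (idx_ne_zero i)]
lemma eN1v_at_zero (hn : 1 ≤ n) : eN1v n 0 = 0 := by
  simp [eN1v, Pi.single_eq_of_ne (zero_ne_last hn)]
lemma eN1v_at_last : eN1v n (Fin.last n) = 1 := by simp [eN1v]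
lemma eN1v_at_idx (i : Fin (n - 1)) : eN1v n (idx i) = 0 := by
  simp [eN1v, Pi.single_eq_of_ne (idx_ne_last i)]

lemma herm_e1v_right (hn : 1 ≤ n) (v : Vc n) : herm n v (e1v n) = v (Fin.last n) := by
  rw [herm_eq hn]
  simp [e1v_at_zero, e1v_at_last hn, e1v_at_idx]

lemma herm_eN1v_right (hn : 1 ≤ n) (v : Vc n) : herm n v (eN1v n) = v 0 := by
  rw [herm_eq hn]
  simp [eN1v_at_zero hn, eN1v_at_last, eN1v_at_idx]

lemma herm_eN1v_left (hn : 1 ≤ n) (v : Vc n) : herm n (eN1v n) v = conj (v 0) := by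
  rw [herm_eq hn]
  simp [eN1v_at_zero hn, eN1v_at_last, eN1v_at_idx]

/-- Intersection of a projective line with a hyperplane `φ = 0`, when `φ q ≠ 0`. -/
lemma line_hyp (p q x : Vc n) (φ : Vc n →ₗ[ℂ] ℂ) (hq : φ q ≠ 0) (hx : x ≠ 0) :
    (x ∈ Submodule.span ℂ ({p, q} : Set (Vc n)) ∧ φ x = 0) ↔
      ∃ s : ℂ, s ≠ 0 ∧ x = s • (φ q • p - φ p • q) := by
  constructor
  · rintro ⟨hsp, hφ⟩
    obtain ⟨s, t, hst⟩ := Submodule.mem_span_pair.mp hsp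
    have hφx : s * φ p + t * φ q = 0 := by
      have h1 : φ (s • p + t • q) = 0 := by rw [hst]; exact hφ
      simpa [map_add, map_smul, smul_eq_mul] using h1
    have hs : s ≠ 0 := by
      rintro rfl
      have ht : t = 0 := by
        have : t * φ q = 0 := by simpa using hφx
        exact (mul_eq_zero.mp this).resolve_right hq
      rw [ht] at hst
      simp at hst
      exact hx hst.symm
    refine ⟨s / φ q, div_ne_zero hs hq, ?_⟩
    have ht : t = -(s * φ p) / φ q := by
      field_simp
      linear_combination hφx
    rw [← hst, ht]
    match_scalars <;> field_simp
  · rintro ⟨s, hs, rfl⟩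
    refine ⟨Submodule.mem_span_pair.mpr ⟨s * φ q, -(s * φ p), by module⟩, ?_⟩
    simp only [map_smul, map_sub, smul_eq_mul]
    ring

lemma mem_singleton_iff_rep (v : Vc n) (hv : v ≠ 0) (r : Prj n) :
    (∃ s : ℂ, s ≠ 0 ∧ r.rep = s • v) ↔ r = Projectivization.mk ℂ v hv := by
  constructor
  · rintro ⟨s, hs, h⟩
    conv_lhs => rw [← Projectivization.mk_rep r]
    rw [Projectivization.mk_eq_mk_iff]
    exact ⟨Units.mk0 s hs, by simp [h, Units.smul_def]⟩
  · rintro rfl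
    obtain ⟨a, ha⟩ := (Projectivization.mk_eq_mk_iff ℂ _ _
      (Projectivization.rep_nonzero _) hv).mp
      (Projectivization.mk_rep (Projectivization.mk ℂ v hv))
    exact ⟨(a : ℂ), a.ne_zero, by rw [← ha, Units.smul_def]⟩

lemma exists_smul_smul (c : ℂ) (hc : c ≠ 0) (v x : Vc n) :
    (∃ s : ℂ, s ≠ 0 ∧ x = s • c • v) ↔ ∃ s : ℂ, s ≠ 0 ∧ x = s • v := by
  constructor
  · rintro ⟨s, hs, rfl⟩
    exact ⟨s * c, mul_ne_zero hs hc, smul_smul s c v⟩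
  · rintro ⟨s, hs, rfl⟩
    exact ⟨s / c, div_ne_zero hs hc, by rw [smul_smul, div_mul_cancel₀ _ hc]⟩

lemma sum_conj_self_eq_zero {m : ℕ} (f : Fin m → ℂ)
    (h : ∑ i, f i * conj (f i) = 0) : ∀ i, f i = 0 := by
  have h1 : ∀ i, f i * conj (f i) = ((Complex.normSq (f i) : ℝ) : ℂ) := fun i =>
    Complex.mul_conj (f i)
  rw [Finset.sum_congr rfl fun i _ => h1 i] at h
  have h2 : ∑ i, Complex.normSq (f i) = 0 := by exact_mod_cast h
  intro i
  have h3 := (Finset.sum_eq_zero_iff_of_nonneg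
    (fun i _ => Complex.normSq_nonneg (f i))).mp h2 i (Finset.mem_univ i)
  exact Complex.normSq_eq_zero.mp h3

lemma key_ne {m : ℕ} (lam : ℂ) (hlam : lam ≠ 0) (zm wv : Fin m → ℂ)
    (hsum : lam + conj lam + ∑ i, zm i * conj (zm i) = 0)
    (i0 : Fin m) (hw : wv i0 ≠ 0)
    (hzero : ∀ i, lam * wv i + (∑ j, wv j * conj (zm j)) * zm i = 0) : False := by
  obtain ⟨S, hS⟩ : ∃ S, S = ∑ j, wv j * conj (zm j) := ⟨_, rfl⟩
  obtain ⟨T, hT⟩ : ∃ T, T = ∑ j, zm j * conj (zm j) := ⟨_, rfl⟩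
  have hz' : ∀ i, lam * wv i + S * zm i = 0 := by rw [hS]; exact hzero
  have h1 : ∑ j, (lam * wv j + S * zm j) * conj (zm j) = 0 :=
    Finset.sum_eq_zero fun j _ => by rw [hz' j]; ring
  have h2 : ∑ j, (lam * wv j + S * zm j) * conj (zm j) = lam * S + S * T := by
    rw [hS, hT, Finset.mul_sum, Finset.mul_sum, ← Finset.sum_add_distrib]
    exact Finset.sum_congr rfl fun j _ => by ring
  have hT2 : T = -(lam + conj lam) := by rw [hT]; linear_combination hsum
  have hSc : S * conj lam = 0 := by linear_combination h2 - h1 + S * hT2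
  have hcl : conj lam ≠ 0 := fun h => hlam (by simpa using congrArg conj h)
  have hS0 : S = 0 := (mul_eq_zero.mp hSc).resolve_right hcl
  have h := hz' i0
  rw [hS0] at h
  simp at h
  rcases h with h | h
  · exact hlam h
  · exact hw h


lemma embedMid_at_idx (u : Fin (n - 1) → ℂ) (i : Fin (n - 1)) :
    embedMid n u (idx i) = u i := by
  simp [embedMid, idx_injective.eq_iff, Finset.sum_ite_eq']

lemma embedMid_at_zero (u : Fin (n - 1) → ℂ) : embedMid n u 0 = 0 :=
  Finset.sum_eq_zero fun j _ => if_neg (idx_ne_zero j)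

lemma embedMid_at_last (u : Fin (n - 1) → ℂ) : embedMid n u (Fin.last n) = 0 :=
  Finset.sum_eq_zero fun j _ => if_neg (idx_ne_last j)

lemma embedMid_smul (c : ℂ) (u : Fin (n - 1) → ℂ) :
    embedMid n (c • u) = c • embedMid n u := by
  funext i
  simp only [embedMid, Pi.smul_apply, smul_eq_mul, Finset.mul_sum]
  exact Finset.sum_congr rfl fun j _ => by split <;> simp

lemma Mz_smul (c : ℂ) (zv : Vc n) : Mz n (c • zv) = (c * conj c) • Mz n zv := by
  funext i j
  simp only [Mz, Pi.smul_apply, smul_eq_mul, Matrix.smul_apply, map_mul]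
  split <;> ring

lemma Mz_mulVec (ζ : Vc n) (u : Fin (n - 1) → ℂ) (i : Fin (n - 1)) :
    (Mz n ζ).mulVec u i =
      ζ (Fin.last n) * conj (ζ 0) * u i + (∑ j, u j * conj (ζ (idx j))) * ζ (idx i) := by
  simp only [Matrix.mulVec, dotProduct, Mz, add_mul, ite_mul, zero_mul,
    Finset.sum_add_distrib, Finset.sum_ite_eq, Finset.mem_univ, if_true, Finset.sum_mul]
  ring_nf
  congr 1
  exact Finset.sum_congr rfl fun j _ => by ring


/-- For `z ∈ ∂ℍⁿ_ℂ \\ {[e₁],[e_{n+1}]}`, the map `φ_z` on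
`Span({e₂,…,e_n})` coincides, under the identification `[0,w₂,…,w_n,0] ↔ [w₂,…,w_n]`, with the
projectivization of the matrix `M_z`. -/
theorem phi_z_eq_proj_Mz
    (n : ℕ) (hn : 2 ≤ n) (zv : Vc n) (hzne : zv ≠ 0)
    (hbd : herm n zv zv = 0)
    (hz1 : Projectivization.mk ℂ zv hzne ≠ e1pt n)
    (hz2 : Projectivization.mk ℂ zv hzne ≠ eN1pt n)
    (w : Prj n) (hw0 : w.rep 0 = 0) (hwlast : w.rep (Fin.last n) = 0) :
    ∀ r : Prj n,
      r ∈ phiSet n (Projectivization.mk ℂ zv hzne) w ↔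
      ∃ c : ℂ, c ≠ 0 ∧
        r.rep = c • embedMid n ((Mz n zv).mulVec (midOf n w.rep)) := by
  intro r
  have hn1 : 1 ≤ n := by omega
  set z := Projectivization.mk ℂ zv hzne with hz
  set ζ := z.rep with hζdef
  -- scalar relating ζ and zv
  obtain ⟨az, haz⟩ := (Projectivization.mk_eq_mk_iff ℂ z.rep zv
    (Projectivization.rep_nonzero z) hzne).mp (Projectivization.mk_rep z)
  have haz' : (az : ℂ) • zv = ζ := (Units.smul_def az zv).symm.trans haz
  have hζζ : herm n ζ ζ = 0 := by
    rw [← haz', herm_smul_left, herm_smul_right, hbd]; ring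
  have hζexp := herm_eq hn1 ζ ζ
  rw [hζζ] at hζexp
  -- ζ 0 ≠ 0
  have hζ0 : ζ 0 ≠ 0 := by
    intro h0
    have hsum0 : ∑ i : Fin (n - 1), ζ (idx i) * conj (ζ (idx i)) = 0 := by
      have := hζexp
      rw [h0] at this
      simpa using this.symm
    have hmid := sum_conj_self_eq_zero _ hsum0
    have hvec : ζ = ζ (Fin.last n) • eN1v n := by
      funext j
      rcases fin_trichotomy hn1 j with rfl | rfl | ⟨i, rfl⟩
      · simp [h0, eN1v_at_zero hn1]
      · simp [eN1v_at_last]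
      · simp [hmid i, eN1v_at_idx]
    have hζl' : ζ (Fin.last n) ≠ 0 := by
      intro hl
      exact Projectivization.rep_nonzero z (by rw [← hζdef, hvec, hl, zero_smul])
    apply hz2
    rw [hz] at *
    calc Projectivization.mk ℂ zv hzne = z := hz.symm
      _ = eN1pt n := by
        rw [← Projectivization.mk_rep z, eN1pt]
        exact (Projectivization.mk_eq_mk_iff ℂ _ _ _ _).mpr
          ⟨Units.mk0 _ hζl', by rw [Units.smul_def, Units.val_mk0]; exact hvec.symm⟩
  -- ζ last ≠ 0
  have hζl : ζ (Fin.last n) ≠ 0 := by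
    intro hl
    have hsum0 : ∑ i : Fin (n - 1), ζ (idx i) * conj (ζ (idx i)) = 0 := by
      have := hζexp
      rw [hl] at this
      simpa using this.symm
    have hmid := sum_conj_self_eq_zero _ hsum0
    have hvec : ζ = ζ 0 • e1v n := by
      funext j
      rcases fin_trichotomy hn1 j with rfl | rfl | ⟨i, rfl⟩
      · simp [e1v_at_zero]
      · simp [hl, e1v_at_last hn1]
      · simp [hmid i, e1v_at_idx]
    have hζ0' : ζ 0 ≠ 0 := by
      intro h0
      exact Projectivization.rep_nonzero z (by rw [← hζdef, hvec, h0, zero_smul])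
    apply hz1
    calc Projectivization.mk ℂ zv hzne = z := hz.symm
      _ = e1pt n := by
        rw [← Projectivization.mk_rep z, e1pt]
        exact (Projectivization.mk_eq_mk_iff ℂ _ _ _ _).mpr
          ⟨Units.mk0 _ hζ0', by rw [Units.smul_def, Units.val_mk0]; exact hvec.symm⟩
  have hcζ0 : conj (ζ 0) ≠ 0 := fun h => hζ0 (by simpa using congrArg conj h)
  -- some middle coordinate of w is nonzero
  obtain ⟨i0, hwi0⟩ : ∃ i : Fin (n - 1), w.rep (idx i) ≠ 0 := by
    by_contra hco
    push_neg at hco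
    apply Projectivization.rep_nonzero w
    funext j
    simp only [Pi.zero_apply]
    rcases fin_trichotomy hn1 j with rfl | rfl | ⟨i, rfl⟩
    · exact hw0
    · exact hwlast
    · exact hco i
  -- the three intermediate vectors
  set p1 : Vc n := conj (ζ 0) • w.rep - herm n w.rep ζ • eN1v n with hp1def
  have hp1_0 : p1 0 = 0 := by
    simp [hp1def, hw0, eN1v_at_zero hn1]
  have hp1_l : p1 (Fin.last n) = -herm n w.rep ζ := by
    simp [hp1def, hwlast, eN1v_at_last]
  have hp1_idx : ∀ i, p1 (idx i) = conj (ζ 0) * w.rep (idx i) := by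
    intro i; simp [hp1def, eN1v_at_idx]
  have hp1ne : p1 ≠ 0 := by
    intro h
    have := congrFun h (idx i0)
    rw [hp1_idx i0] at this
    exact mul_ne_zero hcζ0 hwi0 (by simpa using this)
  set p2 : Vc n := ζ (Fin.last n) • p1 + herm n w.rep ζ • ζ with hp2def
  have hp2_0 : p2 0 = herm n w.rep ζ * ζ 0 := by
    simp [hp2def, hp1_0]
  have hp2_l : p2 (Fin.last n) = 0 := by
    simp [hp2def, hp1_l]; ring
  have hp2_idx : ∀ i, p2 (idx i) =
      ζ (Fin.last n) * conj (ζ 0) * w.rep (idx i) + herm n w.rep ζ * ζ (idx i) := by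
    intro i
    simp [hp2def, hp1_idx i]; ring
  have hwζsum : herm n w.rep ζ = ∑ j, w.rep (idx j) * conj (ζ (idx j)) := by
    rw [herm_eq hn1]; simp [hw0, hwlast]
  -- the middle coordinates of p2 are not all zero
  have hmidne : ¬ ∀ i : Fin (n - 1), p2 (idx i) = 0 := by
    intro hall
    refine key_ne (ζ (Fin.last n) * conj (ζ 0)) (mul_ne_zero hζl hcζ0)
      (fun i => ζ (idx i)) (fun i => w.rep (idx i)) ?_ i0 hwi0 ?_
    · simp only [map_mul, Complex.conj_conj]
      linear_combination -hζexp
    · intro i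
      have h := hall i
      rw [hp2_idx i, hwζsum] at h
      linear_combination h
  have hp2ne : p2 ≠ 0 := by
    intro h
    exact hmidne fun i => by rw [h]; simp
  set p3 : Vc n := p2 - (herm n w.rep ζ * ζ 0) • e1v n with hp3def
  have hp3_idx : ∀ i, p3 (idx i) = p2 (idx i) := by
    intro i; simp [hp3def, e1v_at_idx]
  have hp3ne : p3 ≠ 0 := by
    intro h
    apply hmidne
    intro i
    rw [← hp3_idx i, h]; simp
  -- representatives of the fixed points
  obtain ⟨a1, ha1⟩ := (Projectivization.mk_eq_mk_iff ℂ (e1pt n).rep (e1v n)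
    (Projectivization.rep_nonzero _) (e1v_ne_zero n)).mp
    ((Projectivization.mk_rep (e1pt n)).trans (by rw [e1pt]))
  have ha1' : (a1 : ℂ) • e1v n = (e1pt n).rep := (Units.smul_def a1 _).symm.trans ha1
  obtain ⟨b, hb⟩ := (Projectivization.mk_eq_mk_iff ℂ (eN1pt n).rep (eN1v n)
    (Projectivization.rep_nonzero _) (eN1v_ne_zero n)).mp
    ((Projectivization.mk_rep (eN1pt n)).trans (by rw [eN1pt]))
  have hb' : (b : ℂ) • eN1v n = (eN1pt n).rep := (Units.smul_def b _).symm.trans hb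
  -- Stage A
  have hqA : hermL n ζ (eN1pt n).rep ≠ 0 := by
    rw [hermL_apply, ← hb', herm_smul_left, herm_eN1v_left hn1]
    exact mul_ne_zero b.ne_zero hcζ0
  have stageA : ∀ r' : Prj n,
      r' ∈ projSpan n {w, eN1pt n} ∩ orthHyp n z ↔
        ∃ s : ℂ, s ≠ 0 ∧ r'.rep = s • p1 := by
    intro r'
    have hmem : r' ∈ projSpan n {w, eN1pt n} ∩ orthHyp n z ↔
        (r'.rep ∈ Submodule.span ℂ ({w.rep, (eN1pt n).rep} : Set (Vc n)) ∧
          hermL n ζ r'.rep = 0) := by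
      rw [Set.mem_inter_iff]
      simp only [projSpan, orthHyp, Set.mem_setOf_eq, Set.image_pair, hermL_apply, ← hζdef]
    rw [hmem, line_hyp _ _ _ (hermL n ζ) hqA (Projectivization.rep_nonzero r')]
    have hvec : hermL n ζ (eN1pt n).rep • w.rep - hermL n ζ w.rep • (eN1pt n).rep
        = (b : ℂ) • p1 := by
      rw [← hb', hermL_apply, hermL_apply, herm_smul_left, herm_eN1v_left hn1, hp1def]
      module
    rw [hvec]
    exact exists_smul_smul (b : ℂ) b.ne_zero p1 r'.rep
  have hAset : projSpan n {w, eN1pt n} ∩ orthHyp n z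
      = {Projectivization.mk ℂ p1 hp1ne} := by
    ext r'
    rw [Set.mem_singleton_iff, ← mem_singleton_iff_rep p1 hp1ne r']
    exact stageA r'
  -- the representative of [p1]
  obtain ⟨a2, ha2⟩ := (Projectivization.mk_eq_mk_iff ℂ
    (Projectivization.mk ℂ p1 hp1ne).rep p1 (Projectivization.rep_nonzero _) hp1ne).mp
    (Projectivization.mk_rep _)
  have ha2' : (a2 : ℂ) • p1 = (Projectivization.mk ℂ p1 hp1ne).rep :=
    (Units.smul_def a2 _).symm.trans ha2
  -- Stage B
  have horthB : ∀ x : Vc n, herm n x (e1pt n).rep = 0 ↔ x (Fin.last n) = 0 := by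
    intro x
    rw [← ha1', herm_smul_right, herm_e1v_right hn1, mul_eq_zero]
    have : conj (a1 : ℂ) ≠ 0 := fun h => a1.ne_zero (by simpa using congrArg conj h)
    exact or_iff_right this
  have hqB : (LinearMap.proj (Fin.last n) : Vc n →ₗ[ℂ] ℂ) ζ ≠ 0 := hζl
  have stageB : ∀ r' : Prj n,
      r' ∈ projSpan n (({Projectivization.mk ℂ p1 hp1ne} : Set (Prj n)) ∪ {z})
          ∩ orthHyp n (e1pt n) ↔
        ∃ s : ℂ, s ≠ 0 ∧ r'.rep = s • p2 := by
    intro r'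
    have hmem : r' ∈ projSpan n (({Projectivization.mk ℂ p1 hp1ne} : Set (Prj n)) ∪ {z})
          ∩ orthHyp n (e1pt n) ↔
        (r'.rep ∈ Submodule.span ℂ
            ({(Projectivization.mk ℂ p1 hp1ne).rep, ζ} : Set (Vc n)) ∧
          (LinearMap.proj (Fin.last n) : Vc n →ₗ[ℂ] ℂ) r'.rep = 0) := by
      rw [Set.mem_inter_iff]
      simp only [projSpan, orthHyp, Set.mem_setOf_eq, Set.singleton_union, Set.image_pair,
        LinearMap.proj_apply, ← hζdef]
      rw [horthB]
    rw [hmem, line_hyp _ _ _ _ hqB (Projectivization.rep_nonzero r')]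
    have hvec : (LinearMap.proj (Fin.last n) : Vc n →ₗ[ℂ] ℂ) ζ
          • (Projectivization.mk ℂ p1 hp1ne).rep
        - (LinearMap.proj (Fin.last n) : Vc n →ₗ[ℂ] ℂ)
            (Projectivization.mk ℂ p1 hp1ne).rep • ζ
        = (a2 : ℂ) • p2 := by
      rw [← ha2']
      simp only [LinearMap.proj_apply, Pi.smul_apply, smul_eq_mul, hp1_l, hp2def]
      module
    rw [hvec]
    exact exists_smul_smul (a2 : ℂ) a2.ne_zero p2 r'.rep
  have hBset : projSpan n (({Projectivization.mk ℂ p1 hp1ne} : Set (Prj n)) ∪ {z})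
      ∩ orthHyp n (e1pt n) = {Projectivization.mk ℂ p2 hp2ne} := by
    ext r'
    rw [Set.mem_singleton_iff, ← mem_singleton_iff_rep p2 hp2ne r']
    exact stageB r'
  -- the representative of [p2]
  obtain ⟨a3, ha3⟩ := (Projectivization.mk_eq_mk_iff ℂ
    (Projectivization.mk ℂ p2 hp2ne).rep p2 (Projectivization.rep_nonzero _) hp2ne).mp
    (Projectivization.mk_rep _)
  have ha3' : (a3 : ℂ) • p2 = (Projectivization.mk ℂ p2 hp2ne).rep :=
    (Units.smul_def a3 _).symm.trans ha3
  -- Stage C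
  have horthC : ∀ x : Vc n, herm n x (eN1pt n).rep = 0 ↔ x 0 = 0 := by
    intro x
    rw [← hb', herm_smul_right, herm_eN1v_right hn1, mul_eq_zero]
    have : conj (b : ℂ) ≠ 0 := fun h => b.ne_zero (by simpa using congrArg conj h)
    exact or_iff_right this
  have hqC : (LinearMap.proj (0 : Fin (n + 1)) : Vc n →ₗ[ℂ] ℂ) (e1pt n).rep ≠ 0 := by
    rw [LinearMap.proj_apply, ← ha1']
    simp only [Pi.smul_apply, smul_eq_mul, e1v_at_zero, mul_one]
    exact a1.ne_zero
  have stageC : ∀ r' : Prj n,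
      r' ∈ projSpan n (({Projectivization.mk ℂ p2 hp2ne} : Set (Prj n)) ∪ {e1pt n})
          ∩ orthHyp n (eN1pt n) ↔
        ∃ s : ℂ, s ≠ 0 ∧ r'.rep = s • p3 := by
    intro r'
    have hmem : r' ∈ projSpan n (({Projectivization.mk ℂ p2 hp2ne} : Set (Prj n)) ∪ {e1pt n})
          ∩ orthHyp n (eN1pt n) ↔
        (r'.rep ∈ Submodule.span ℂ
            ({(Projectivization.mk ℂ p2 hp2ne).rep, (e1pt n).rep} : Set (Vc n)) ∧
          (LinearMap.proj (0 : Fin (n + 1)) : Vc n →ₗ[ℂ] ℂ) r'.rep = 0) := by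
      rw [Set.mem_inter_iff]
      simp only [projSpan, orthHyp, Set.mem_setOf_eq, Set.singleton_union, Set.image_pair,
        LinearMap.proj_apply]
      rw [horthC]
    rw [hmem, line_hyp _ _ _ _ hqC (Projectivization.rep_nonzero r')]
    have hvec : (LinearMap.proj (0 : Fin (n + 1)) : Vc n →ₗ[ℂ] ℂ) (e1pt n).rep
          • (Projectivization.mk ℂ p2 hp2ne).rep
        - (LinearMap.proj (0 : Fin (n + 1)) : Vc n →ₗ[ℂ] ℂ)
            (Projectivization.mk ℂ p2 hp2ne).rep • (e1pt n).rep
        = ((a1 : ℂ) * (a3 : ℂ)) • p3 := by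
      rw [← ha3', ← ha1']
      simp only [LinearMap.proj_apply, Pi.smul_apply, smul_eq_mul, e1v_at_zero, mul_one,
        hp2_0, hp3def]
      module
    rw [hvec]
    exact exists_smul_smul _ (mul_ne_zero a1.ne_zero a3.ne_zero) p3 r'.rep
  -- assemble
  have hphi : r ∈ phiSet n z w ↔ ∃ s : ℂ, s ≠ 0 ∧ r.rep = s • p3 := by
    rw [phiSet, hAset, hBset]
    exact stageC r
  -- identify p3 with the matrix image
  have hp3eq : p3 = embedMid n ((Mz n ζ).mulVec (midOf n w.rep)) := by
    funext j
    rcases fin_trichotomy hn1 j with rfl | rfl | ⟨i, rfl⟩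
    · rw [embedMid_at_zero]
      simp [hp3def, hp2_0, e1v_at_zero]
    · rw [embedMid_at_last]
      simp [hp3def, hp2_l, e1v_at_last hn1]
    · rw [embedMid_at_idx, hp3_idx i, hp2_idx i, Mz_mulVec]
      rw [hwζsum]
      simp only [midOf]
      try ring
  have hMzscale : (Mz n ζ).mulVec (midOf n w.rep)
      = ((az : ℂ) * conj (az : ℂ)) • (Mz n zv).mulVec (midOf n w.rep) := by
    rw [← haz', Mz_smul, Matrix.smul_mulVec]
  have hazc : ((az : ℂ) * conj (az : ℂ)) ≠ 0 :=
    mul_ne_zero az.ne_zero (fun h => az.ne_zero (by simpa using congrArg conj h))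
  rw [hphi, hp3eq, hMzscale, embedMid_smul]
  exact exists_smul_smul _ hazc _ r.rep


end CKG
end
end

section
/- Let n ≥ 2 and let z = [z₁,…,z_{n+1}] ∈ ∂ℍⁿ_ℂ with z not in the projective line Span({[e₁],[e_{n+1}]}). Let M_z be the (n−1)×(n−1) matrix with (i,j) entry z_{i+1} z̄_{j+1} for i ≠ j and z_{n+1} z̄₁ + |z_{i+1}|² for i = j. Then the vector z̃₀ = (z₂,…,z_n) is an eigenvector of M_z with eigenvalue λ_z = z_{n+1} z̄₁ + Σ_{j=2}^{n} |z_j|² = −z₁ z̄_{n+1} = |z₁ z̄_{n+1}| e^{i𝔸([e₁],[z],[e_{n+1}])}, where 𝔸 denotes the Cartan angular invariant. -/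
noncomputable section

open scoped ComplexConjugate
open scoped Matrix

namespace CKG

lemma sum_mid (n : ℕ) (hn : 2 ≤ n) (g : Fin (n + 1) → ℂ) :
    (∑ i : Fin (n + 1), if i ≠ 0 ∧ i ≠ Fin.last n then g i else 0) =
      ∑ j : Fin (n - 1), g (idx j) := by
  rw [← Finset.sum_filter]
  have hset : (Finset.univ.filter fun i : Fin (n+1) => i ≠ 0 ∧ i ≠ Fin.last n)
      = Finset.univ.image (idx (n := n)) := by
    ext i
    simp only [Finset.mem_filter, Finset.mem_univ, true_and, Finset.mem_image, ne_eq]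
    constructor
    · rintro ⟨h1, h2⟩
      have hv0 : i.val ≠ 0 := fun h => h1 (Fin.ext h)
      have hvl : i.val ≠ n := fun h => h2 (Fin.ext (by simpa [Fin.val_last] using h))
      refine ⟨⟨i.val - 1, by have := i.isLt; omega⟩, ?_⟩
      apply Fin.ext; simp only [idx]; omega
    · rintro ⟨j, rfl⟩
      refine ⟨fun h => ?_, fun h => ?_⟩
      · have := congrArg Fin.val h; simp [idx] at this
      · have := congrArg Fin.val h
        simp only [idx, Fin.val_last] at this
        have := j.isLt; omega
  rw [hset, Finset.sum_image]
  intro x _ y _ h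
  have := congrArg Fin.val h
  simp only [idx] at this
  exact Fin.ext (by omega)

lemma herm_eval (n : ℕ) (hn : 2 ≤ n) (v w : Vc n) :
    herm n v w = v 0 * conj (w (Fin.last n)) + v (Fin.last n) * conj (w 0) +
      ∑ j : Fin (n - 1), v (idx j) * conj (w (idx j)) := by
  have h0l : (0 : Fin (n + 1)) ≠ Fin.last n := by
    intro h; have := Fin.val_eq_of_eq h; simp [Fin.val_last] at this; omega
  unfold herm Hmat
  have key : ∀ i j : Fin (n + 1),
      v i * (if (i = 0 ∧ j = Fin.last n) ∨ (i = Fin.last n ∧ j = 0) ∨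
          (i = j ∧ i ≠ 0 ∧ i ≠ Fin.last n) then (1:ℂ) else 0) * conj (w j) =
      (if i = 0 ∧ j = Fin.last n then v i * conj (w j) else 0) +
      (if i = Fin.last n ∧ j = 0 then v i * conj (w j) else 0) +
      (if i = j ∧ i ≠ 0 ∧ i ≠ Fin.last n then v i * conj (w j) else 0) := by
    intro i j
    simp only [Fin.ext_iff, Fin.val_last, Fin.val_zero, ne_eq]
    split_ifs <;> (try ring) <;> omega
  simp only [key, Finset.sum_add_distrib]
  congr 1
  · congr 1
    · -- first term
      simp only [ite_and]
      rw [Finset.sum_comm]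
      simp [Finset.sum_ite_eq', Finset.sum_ite_eq]
    · simp only [ite_and]
      simp [Finset.sum_ite_eq', Finset.sum_ite_eq]
  · have inner : ∀ i : Fin (n + 1),
        (∑ j, if i = j ∧ i ≠ 0 ∧ i ≠ Fin.last n then v i * conj (w j) else 0) =
        (if i ≠ 0 ∧ i ≠ Fin.last n then v i * conj (w i) else 0) := by
      intro i
      simp only [ite_and]
      simp [Finset.sum_ite_eq]
    simp only [inner]
    exact sum_mid n hn _

/-- For `z ∈ ∂ℍⁿ_ℂ` not on the projective line through `[e₁]` and
`[e_{n+1}]` (i.e. `(z₂,…,z_n) ≠ 0`), the vector `z̃₀ = (z₂,…,z_n)` is an eigenvector of `M_z`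
with eigenvalue `λ_z = z_{n+1} z̄₁ + Σ_{j=2}^n |z_j|² = −z₁ z̄_{n+1}
= |z₁ z̄_{n+1}| e^{i𝔸([e₁],[z],[e_{n+1}])}`. -/
theorem mid_z_eigenvector_of_Mz
    (n : ℕ) (hn : 2 ≤ n) (zv : Vc n) (hzne : zv ≠ 0)
    (hbd : herm n zv zv = 0)
    (hmid : midOf n zv ≠ 0) :
    ∃ lam : ℂ,
      (Mz n zv).mulVec (midOf n zv) = lam • midOf n zv ∧
      lam = zv (Fin.last n) * conj (zv 0) +
        ∑ j : Fin (n - 1), zv (idx j) * conj (zv (idx j)) ∧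
      lam = -(zv 0 * conj (zv (Fin.last n))) ∧
      lam = ((‖zv 0 * conj (zv (Fin.last n))‖ : ℝ) : ℂ) *
        Complex.exp (Complex.I * (cartanArg n (e1v n) zv (eN1v n))) := by
  have h0l : (0 : Fin (n + 1)) ≠ Fin.last n := by
    intro h; have := Fin.val_eq_of_eq h; simp [Fin.val_last] at this; omega
  have hidx0 : ∀ j : Fin (n - 1), idx j ≠ (0 : Fin (n + 1)) := by
    intro j h; have := Fin.val_eq_of_eq h; simp [idx] at this
  have hidxl : ∀ j : Fin (n - 1), idx j ≠ Fin.last n := by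
    intro j h; have := Fin.val_eq_of_eq h
    simp only [idx, Fin.val_last] at this; have := j.isLt; omega
  set S : ℂ := ∑ j : Fin (n - 1), zv (idx j) * conj (zv (idx j)) with hS
  set lam : ℂ := zv (Fin.last n) * conj (zv 0) + S with hlam
  refine ⟨lam, ?_, rfl, ?_, ?_⟩
  · funext i
    simp only [Matrix.mulVec, dotProduct, Mz, midOf, Pi.smul_apply, smul_eq_mul]
    simp only [add_mul, Finset.sum_add_distrib, ite_mul, zero_mul]
    rw [Finset.sum_ite_eq (Finset.univ : Finset (Fin (n-1))) i
      (fun j => zv (Fin.last n) * conj (zv 0) * zv (idx j))]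
    simp only [Finset.mem_univ, if_true]
    have : ∑ j : Fin (n-1), zv (idx i) * conj (zv (idx j)) * zv (idx j)
        = zv (idx i) * S := by
      rw [hS, Finset.mul_sum]; exact Finset.sum_congr rfl fun j _ => by ring
    rw [this, hlam]; ring
  · have hb := herm_eval n hn zv zv
    rw [hbd] at hb
    rw [hlam, hS]
    have : zv 0 * conj (zv (Fin.last n)) + lam = 0 := by
      rw [hlam]; linear_combination -hb
    linear_combination this - hlam
  · -- compute the three hermitian products
    have he1z : herm n (e1v n) zv = conj (zv (Fin.last n)) := by
      rw [herm_eval n hn]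
      simp [e1v, Pi.single_apply, h0l, fun j => (hidx0 j).symm]
    have hzeN : herm n zv (eN1v n) = zv 0 := by
      rw [herm_eval n hn]
      simp [eN1v, Pi.single_apply, Ne.symm h0l, hidxl]
    have heNe1 : herm n (eN1v n) (e1v n) = 1 := by
      rw [herm_eval n hn]
      simp [eN1v, e1v, Pi.single_apply, h0l, Ne.symm h0l,
        fun j => (hidx0 j).symm, fun j => (hidxl j).symm]
    have hlamval : lam = -(zv 0 * conj (zv (Fin.last n))) := by
      have hb := herm_eval n hn zv zv
      rw [hbd] at hb
      rw [hlam, hS]; linear_combination -hb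
    have hargval : cartanArg n (e1v n) zv (eN1v n) = Complex.arg lam := by
      unfold cartanArg
      rw [he1z, hzeN, heNe1, hlamval]
      ring_nf
    rw [hargval, hlamval, mul_comm Complex.I]
    rw [show ‖zv 0 * conj (zv (Fin.last n))‖
        = ‖-(zv 0 * conj (zv (Fin.last n)))‖ by rw [norm_neg]]
    exact (Complex.norm_mul_exp_arg_mul_I _).symm

end CKG
end
end
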